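/- Let F(z_1,…,z_M) be a formula coloring instance (a conjunction of clauses of the forms (z_u ≠ z_v) and ((z_u ≠ z_v) ∨ (z_k = z_l))). If F has a valid coloring using k colors, then the associated integer program ILP_F (with binary variables w_i, x_{u,i} for 1 ≤ u,i ≤ M, variables ẑ_u ∈ {1,…,M}, and the stated constraints) has a feasible assignment whose objective value Σ_i w_i equals k. -/

import Mathlib

/-- A formula coloring instance over `M` variables: a conjunction of
clauses `(z_u ≠ z_v)` (`neqClauses`) and clauses
`((z_u ≠ z_v) ∨ (z_k = z_l))` (`implClauses`, stored as `(u, v, k, l)`). -/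
structure FCInstance (M : ℕ) where
  neqClauses : List (Fin M × Fin M)
  implClauses : List (Fin M × Fin M × Fin M × Fin M)

/-- A coloring `c` satisfies the formula coloring instance `F`. -/
def FCInstance.Sat {M : ℕ} (F : FCInstance M) {C : Type*} (c : Fin M → C) : Prop :=
  (∀ p ∈ F.neqClauses, c p.1 ≠ c p.2) ∧
  (∀ p ∈ F.implClauses, c p.1 ≠ c p.2.1 ∨ c p.2.2.1 = c p.2.2.2)

/-- The number of colors used by a coloring `c`. -/
def colorsUsed {M : ℕ} {C : Type*} [DecidableEq C] (c : Fin M → C) : ℕ :=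
  (Finset.image c Finset.univ).card

/-- An assignment of the variables of the integer program `ILP_F` associated with a
formula coloring instance over `M` variables with `R` clauses of the second kind. -/
structure ILPAssign (M R : ℕ) where
  w : Fin M → ℕ
  x : Fin M → Fin M → ℕ
  zhat : Fin M → ℕ
  a : Fin R → ℕ
  b : Fin R → ℕ
  s : Fin R → ℕ

/-- Feasibility of an assignment for the integer program `ILP_F`:
all indicator variables are binary, `1 ≤ ẑ_u ≤ M`, and constraints (1)–(8) hold,
where color `i : Fin M` stands for the color value `i + 1 ∈ {1, …, M}`. -/
def ILPFeasible {M : ℕ} (F : FCInstance M) (A : ILPAssign M F.implClauses.length) : Prop :=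
  (∀ i, A.w i = 0 ∨ A.w i = 1) ∧
  (∀ u i, A.x u i = 0 ∨ A.x u i = 1) ∧
  (∀ j, A.a j = 0 ∨ A.a j = 1) ∧
  (∀ j, A.b j = 0 ∨ A.b j = 1) ∧
  (∀ j, A.s j = 0 ∨ A.s j = 1) ∧
  (∀ u, 1 ≤ A.zhat u ∧ A.zhat u ≤ M) ∧
  -- (1)  x_{u,i} = 1 ⟺ ẑ_u = i
  (∀ u i, A.x u i = 1 ↔ A.zhat u = (i : ℕ) + 1) ∧
  -- (2)  Σ_i x_{u,i} = 1
  (∀ u, ∑ i, A.x u i = 1) ∧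
  -- (3)  x_{u,i} ≤ w_i
  (∀ u i, A.x u i ≤ A.w i) ∧
  -- (4)  for every clause (z_u ≠ z_v) and every i,  x_{u,i} + x_{v,i} ≤ 1
  (∀ p ∈ F.neqClauses, ∀ i, A.x p.1 i + A.x p.2 i ≤ 1) ∧
  -- (5)–(8)  for every clause ((z_u ≠ z_v) ∨ (z_k = z_l))
  (∀ j : Fin F.implClauses.length,
    (A.a j = 1 ↔ A.zhat (F.implClauses.get j).2.2.1 = A.zhat (F.implClauses.get j).2.2.2) ∧
    (A.b j = 1 ↔ A.zhat (F.implClauses.get j).1 ≠ A.zhat (F.implClauses.get j).2.1) ∧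
    A.s j = max (A.a j) (A.b j) ∧
    1 ≤ A.s j)

theorem stmt_9 {M : ℕ} (F : FCInstance M) (k : ℕ) (c : Fin M → ℕ)
    (hsat : F.Sat c) (hk : colorsUsed c = k) :
    ∃ A : ILPAssign M F.implClauses.length, ILPFeasible F A ∧ ∑ i, A.w i = k := by
  classical
  have hmem : ∀ u, c u ∈ Finset.image c Finset.univ :=
    fun u => Finset.mem_image_of_mem c (Finset.mem_univ u)
  have hcard : (Finset.image c Finset.univ).card = k := hk
  have hkM : k ≤ M := by
    rw [← hk]
    calc colorsUsed c ≤ (Finset.univ : Finset (Fin M)).card := Finset.card_image_le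
      _ = M := by simp
  set e := (Finset.image c Finset.univ).orderIsoOfFin hcard with he
  set idx : Fin M → Fin k := fun u => e.symm ⟨c u, hmem u⟩ with hidxdef
  have hidx : ∀ u v, idx u = idx v ↔ c u = c v := by
    intro u v
    constructor
    · intro h
      have h2 : e (idx u) = e (idx v) := congrArg e h
      simpa [hidxdef, Subtype.ext_iff] using h2
    · intro h; simp [hidxdef, h]
  have hz : ∀ u v, ((idx u : ℕ) + 1 = (idx v : ℕ) + 1) ↔ c u = c v := by
    intro u v
    rw [← hidx u v, Fin.ext_iff]
    omega
  refine ⟨⟨fun i => if (i : ℕ) < k then 1 else 0,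
    fun u i => if (i : ℕ) = (idx u : ℕ) then 1 else 0,
    fun u => (idx u : ℕ) + 1,
    fun j => if c (F.implClauses.get j).2.2.1 = c (F.implClauses.get j).2.2.2 then 1 else 0,
    fun j => if c (F.implClauses.get j).1 ≠ c (F.implClauses.get j).2.1 then 1 else 0,
    fun j => max (if c (F.implClauses.get j).2.2.1 = c (F.implClauses.get j).2.2.2 then 1 else 0)
      (if c (F.implClauses.get j).1 ≠ c (F.implClauses.get j).2.1 then 1 else 0)⟩, ?_, ?_⟩
  · refine ⟨?_, ?_, ?_, ?_, ?_, ?_, ?_, ?_, ?_, ?_, ?_⟩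
    · intro i; dsimp only; split <;> simp
    · intro u i; dsimp only; split <;> simp
    · intro j; dsimp only; split <;> simp
    · intro j; dsimp only; split <;> simp
    · intro j; dsimp only; split <;> split <;> simp
    · intro u
      dsimp only
      refine ⟨Nat.le_add_left 1 _, ?_⟩
      have h1 : (idx u : ℕ) < k := (idx u).isLt
      omega
    · intro u i
      dsimp only
      constructor
      · intro h
        have : (i : ℕ) = (idx u : ℕ) := by by_contra hne; simp [hne] at h
        omega
      · intro h
        have : (i : ℕ) = (idx u : ℕ) := by omega
        simp [this]
    · intro u
      dsimp only
      have hlt : (idx u : ℕ) < M := lt_of_lt_of_le (idx u).isLt hkM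
      set i0 : Fin M := ⟨(idx u : ℕ), hlt⟩ with hi0
      calc ∑ i : Fin M, (if (i : ℕ) = (idx u : ℕ) then 1 else 0)
          = ∑ i : Fin M, (if i = i0 then 1 else 0) := by
            refine Finset.sum_congr rfl fun i _ => ?_
            congr 1
            simp [hi0, Fin.ext_iff]
        _ = 1 := by simp
    · intro u i
      dsimp only
      split
      · next h =>
        have : (i : ℕ) < k := h ▸ (idx u).isLt
        simp [this]
      · simp
    · intro p hp i
      dsimp only
      have hne := hsat.1 p hp
      have hvne : (idx p.1 : ℕ) ≠ (idx p.2 : ℕ) :=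
        fun hval => hne ((hidx _ _).1 (Fin.ext hval))
      split <;> split <;> omega
    · intro j
      dsimp only
      have hmem' : F.implClauses.get j ∈ F.implClauses := by
        have := List.get_mem F.implClauses ⟨j.1, j.2⟩
        simp only [Fin.eta] at this
        exact this
      refine ⟨?_, ?_, rfl, ?_⟩
      · rw [hz]
        by_cases hP : c (F.implClauses.get j).2.2.1 = c (F.implClauses.get j).2.2.2
        · simp [hP]
        · simp [hP]
      · rw [show ((idx (F.implClauses.get j).1 : ℕ) + 1 ≠ (idx (F.implClauses.get j).2.1 : ℕ) + 1)
          ↔ ¬ c (F.implClauses.get j).1 = c (F.implClauses.get j).2.1 from not_congr (hz _ _)]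
        by_cases hP : c (F.implClauses.get j).1 = c (F.implClauses.get j).2.1
        · simp [hP]
        · simp [hP]
      · rcases hsat.2 _ hmem' with h | h
        · have h1 : (if c (F.implClauses.get j).1 ≠ c (F.implClauses.get j).2.1
              then 1 else 0) = 1 := if_pos h
          calc (1 : ℕ) = _ := h1.symm
            _ ≤ _ := le_max_right _ _
        · have h1 : (if c (F.implClauses.get j).2.2.1 = c (F.implClauses.get j).2.2.2
              then 1 else 0) = 1 := if_pos h
          calc (1 : ℕ) = _ := h1.symm
            _ ≤ _ := le_max_left _ _
  · dsimp only
    calc ∑ i : Fin M, (if (i : ℕ) < k then 1 else 0)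
        = ∑ i ∈ Finset.range M, (if i < k then 1 else 0) :=
          Fin.sum_univ_eq_sum_range (fun i => if i < k then 1 else 0) M
      _ = ∑ i ∈ Finset.filter (· < k) (Finset.range M), 1 := (Finset.sum_filter _ _).symm
      _ = k := by
          have hf : Finset.filter (· < k) (Finset.range M) = Finset.range k := by
            ext i
            simp only [Finset.mem_filter, Finset.mem_range]
            omega
          rw [hf]
          simp
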